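/- Let G be a finite group, K a field of characteristic 0, and t ∈ K transcendental over ℚ. Define a bilinear form on the group algebra K[G] by B(σ, τ) = t^{n(σ·τ)} on group elements (extended bilinearly), where n : G → ℕ is any function satisfying n(e) = d and n(g) < d for all g ≠ e, for some fixed d. Then the bilinear form B'(σ, τ) = B(σ⁻¹, τ) is nondegenerate. -/

import Mathlib

open Polynomial Matrix

lemma aux_det_ne {G : Type*} [Group G] [Fintype G] [DecidableEq G]
    (d : ℕ) (n : G → ℕ) (hne : n 1 = d) (hlt : ∀ g : G, g ≠ 1 → n g < d) :
    (Matrix.of (fun σ τ : G => (X : ℚ[X]) ^ n (σ⁻¹ * τ))).det ≠ 0 := by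
  set N := Fintype.card G * d with hN
  have hle : ∀ g : G, n g ≤ d := by
    intro g
    by_cases hg : g = 1
    · simp [hg, hne]
    · exact (hlt g hg).le
  have hcoeff : ((Matrix.of (fun σ τ : G => (X : ℚ[X]) ^ n (σ⁻¹ * τ))).det).coeff N = 1 := by
    rw [Matrix.det_apply, Polynomial.finset_sum_coeff]
    have key : ∀ σ : Equiv.Perm G,
        (Equiv.Perm.sign σ • ∏ i, (Matrix.of (fun σ τ : G => (X : ℚ[X]) ^ n (σ⁻¹ * τ))) (σ i) i).coeff N
        = if σ = 1 then 1 else 0 := by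
      intro σ
      have hprod : (∏ i, (Matrix.of (fun σ τ : G => (X : ℚ[X]) ^ n (σ⁻¹ * τ))) (σ i) i)
          = X ^ (∑ i, n ((σ i)⁻¹ * i)) := by
        simp [Finset.prod_pow_eq_pow_sum]
      rw [hprod]
      by_cases hσ : σ = 1
      · subst hσ
        have hsum : (∑ i : G, n (((1 : Equiv.Perm G) i)⁻¹ * i)) = N := by
          simp only [Equiv.Perm.one_apply, inv_mul_cancel, hne]
          simp [hN, mul_comm]
        rw [if_pos rfl, Equiv.Perm.sign_one, one_smul, hsum, coeff_X_pow, if_pos rfl]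
      · have hsum : (∑ i, n ((σ i)⁻¹ * i)) < N := by
          obtain ⟨i, hi⟩ : ∃ i : G, σ i ≠ i := by
            by_contra h
            push_neg at h
            exact hσ (Equiv.ext h)
          calc (∑ i, n ((σ i)⁻¹ * i)) < ∑ _i : G, d := by
                refine Finset.sum_lt_sum (fun j _ => hle _) ⟨i, Finset.mem_univ i, ?_⟩
                refine hlt _ (fun h => hi ?_)
                rwa [inv_mul_eq_one] at h
            _ = N := by simp [hN, mul_comm]
        rw [if_neg hσ]
        rw [Polynomial.coeff_smul, coeff_X_pow, if_neg hsum.ne', smul_zero]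
    rw [Finset.sum_congr rfl (fun σ _ => key σ)]
    simp
  intro h
  rw [h] at hcoeff
  simp at hcoeff

/-- Let `G` be a finite group, `K` a field of characteristic `0`, and `t ∈ K`
transcendental over `ℚ`.  Let `n : G → ℕ` satisfy `n 1 = d` and `n g < d` for `g ≠ 1`.
If `B'` is the bilinear form on the group algebra `K[G]` determined on group elements
by `B'(σ, τ) = B(σ⁻¹, τ) = t ^ n (σ⁻¹ τ)` (extended bilinearly), then `B'` is
nondegenerate. -/
theorem stmt_17 {K G : Type*} [Field K] [CharZero K] [Group G] [Fintype G]
    (t : K) (htr : Transcendental ℚ t)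
    (d : ℕ) (n : G → ℕ) (hne : n 1 = d) (hlt : ∀ g : G, g ≠ 1 → n g < d)
    (B' : MonoidAlgebra K G →ₗ[K] MonoidAlgebra K G →ₗ[K] K)
    (hB' : ∀ σ τ : G,
      B' (MonoidAlgebra.single σ 1) (MonoidAlgebra.single τ 1) = t ^ n (σ⁻¹ * τ)) :
    (∀ x : MonoidAlgebra K G, (∀ y, B' x y = 0) → x = 0) ∧
    (∀ y : MonoidAlgebra K G, (∀ x, B' x y = 0) → y = 0) := by
  classical
  set M : Matrix G G K := Matrix.of (fun σ τ : G => t ^ n (σ⁻¹ * τ)) with hM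
  have hdet : M.det ≠ 0 := by
    have h0 := aux_det_ne d n hne hlt
    have hmap : M = (Matrix.of (fun σ τ : G => (X : ℚ[X]) ^ n (σ⁻¹ * τ))).map (aeval t) := by
      ext σ τ; simp [hM]
    rw [hmap]
    intro h
    refine htr ⟨_, h0, ?_⟩
    rw [AlgHom.map_det]
    exact h
  have hunit : IsUnit M.det := hdet.isUnit
  have hrep : ∀ x : MonoidAlgebra K G, x = ∑ σ : G, x.coeff σ • MonoidAlgebra.single σ 1 := by
    intro x
    ext g
    rw [MonoidAlgebra.coeff_sum, Finset.sum_apply']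
    simp [MonoidAlgebra.coeff_single, Finsupp.single_apply]
  constructor
  · intro x hx
    have hv : ∀ τ : G, ∑ σ : G, x.coeff σ * M σ τ = 0 := by
      intro τ
      have h := hx (MonoidAlgebra.single τ 1)
      rw [hrep x, map_sum] at h
      simp only [LinearMap.sum_apply, _root_.map_smul, LinearMap.smul_apply, hB', smul_eq_mul] at h
      simpa [hM] using h
    have hvm : Matrix.vecMul (fun σ => x.coeff σ) M = 0 := by
      funext τ
      simpa [Matrix.vecMul, dotProduct] using hv τ
    have hx0 : (fun σ => x.coeff σ) = 0 := by
      have h2 := congrArg (fun w => Matrix.vecMul w M⁻¹) hvm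
      simpa [Matrix.vecMul_vecMul, Matrix.mul_nonsing_inv M hunit] using h2
    ext g
    exact congrFun hx0 g
  · intro y hy
    have hv : ∀ σ : G, ∑ τ : G, M σ τ * y.coeff τ = 0 := by
      intro σ
      have h := hy (MonoidAlgebra.single σ 1)
      rw [hrep y, map_sum] at h
      simp only [_root_.map_smul, smul_eq_mul, hB'] at h
      simpa [hM, mul_comm] using h
    have hvm : Matrix.mulVec M (fun τ => y.coeff τ) = 0 := by
      funext σ
      simpa [Matrix.mulVec, dotProduct] using hv σ
    have hy0 : (fun τ => y.coeff τ) = 0 := by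
      have h2 := congrArg (fun w => Matrix.mulVec M⁻¹ w) hvm
      simpa [Matrix.mulVec_mulVec, Matrix.nonsing_inv_mul M hunit] using h2
    ext g
    exact congrFun hy0 g
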